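/- Let F : W → ℝⁿ be a C^∞ map on an open set W ⊆ ℝᵐ, let a₀ ∈ ℝⁿ, let y₀ ∈ W be a local minimizer of f_{a₀}(y) := ½‖a₀ − F(y)‖² whose Hessian H at y₀ is invertible, and let A ∋ a₀, Y ∋ y₀ and g : A → Y be as in the localized minimizer theorem (g(a) is the unique minimizer of f_a over cl(Y) and g(a₀) = y₀). Let χ : W → ℝᵖ be any C^∞ map. Then g is differentiable at a₀ with Dg(a₀) = H⁻¹ DF(y₀)ᵀ, and the output map ρ := χ ∘ g satisfies lim_{ε→0⁺} sup{ ‖ρ(a) − ρ(a₀)‖/‖a − a₀‖ : a ∈ A, 0 < ‖a − a₀‖ ≤ ε } = ‖Dχ(y₀) H⁻¹ DF(y₀)ᵀ‖. -/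

import Mathlib

open Filter Topology
open scoped RealInnerProductSpace

noncomputable section

/-- Rice's absolute condition number of a differentiable map equals the operator norm of
its derivative. -/
lemma rice_limit {E F : Type*} [NormedAddCommGroup E] [NormedSpace ℝ E]
    [NormedAddCommGroup F] [NormedSpace ℝ F]
    {A : Set E} (hA : IsOpen A) {a₀ : E} (ha₀ : a₀ ∈ A) {h : E → F} {L : E →L[ℝ] F}
    (hd : HasFDerivAt h L a₀) :
    Tendsto (fun ε : ℝ => sSup {q : ℝ | ∃ a ∈ A, 0 < ‖a - a₀‖ ∧ ‖a - a₀‖ ≤ ε ∧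
        q = ‖h a - h a₀‖ / ‖a - a₀‖}) (𝓝[>] (0 : ℝ)) (𝓝 ‖L‖) := by
  rw [Metric.tendsto_nhds]
  intro δ hδ
  have hδ3 : (0:ℝ) < δ / 3 := by linarith
  have hlo := hd.isLittleO.def hδ3
  rw [Metric.eventually_nhds_iff] at hlo
  obtain ⟨r₁, hr₁, hball₁⟩ := hlo
  obtain ⟨r₂, hr₂, hball₂⟩ := Metric.isOpen_iff.mp hA a₀ ha₀
  set r := min r₁ r₂ with hr
  have hrpos : 0 < r := lt_min hr₁ hr₂
  filter_upwards [Ioo_mem_nhdsGT_of_mem (show (0:ℝ) ∈ Set.Ico 0 r from ⟨le_refl _, hrpos⟩)]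
  intro ε hε
  obtain ⟨hε0, hεr⟩ := hε
  set S := {q : ℝ | ∃ a ∈ A, 0 < ‖a - a₀‖ ∧ ‖a - a₀‖ ≤ ε ∧ q = ‖h a - h a₀‖ / ‖a - a₀‖} with hS
  have hub : ∀ q ∈ S, q ≤ ‖L‖ + δ / 3 := by
    rintro q ⟨a, haA, hpos, hle, rfl⟩
    have hda : dist a a₀ < r₁ := by
      rw [dist_eq_norm]; exact lt_of_le_of_lt hle (lt_of_lt_of_le hεr (min_le_left _ _))
    have hkey : ‖h a - h a₀‖ ≤ (‖L‖ + δ / 3) * ‖a - a₀‖ := by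
      have h1 : ‖h a - h a₀‖ ≤ ‖L (a - a₀)‖ + ‖h a - h a₀ - L (a - a₀)‖ := by
        have := norm_add_le (L (a - a₀)) (h a - h a₀ - L (a - a₀))
        simpa using this
      have h2 := hball₁ hda
      have h3 := L.le_opNorm (a - a₀)
      nlinarith [norm_nonneg (a - a₀)]
    rw [div_le_iff₀ hpos]
    exact hkey
  have hbdd : BddAbove S := ⟨‖L‖ + δ / 3, hub⟩
  have hsup_le : sSup S ≤ ‖L‖ + δ / 3 := Real.sSup_le hub (by positivity)
  have hsup_nonneg : 0 ≤ sSup S :=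
    Real.sSup_nonneg (by rintro q ⟨a, _, hpos, _, rfl⟩; positivity)
  rcases le_or_gt ‖L‖ (δ / 2) with hL | hL
  · rw [Real.dist_eq, abs_sub_lt_iff]
    constructor
    · linarith
    · linarith
  · have hx : ∃ x : E, (‖L‖ - δ / 3) * ‖x‖ < ‖L x‖ := by
      by_contra hall
      push_neg at hall
      have := L.opNorm_le_bound (by linarith) (fun x => hall x)
      linarith
    obtain ⟨x, hx⟩ := hx
    have hx0 : x ≠ 0 := by
      intro h0; rw [h0] at hx; simp at hx
    have hxn : (0:ℝ) < ‖x‖ := norm_pos_iff.mpr hx0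
    set u := ‖x‖⁻¹ • x with hu
    have hun : ‖u‖ = 1 := norm_smul_inv_norm hx0
    have hLu : ‖L‖ - δ / 3 < ‖L u‖ := by
      have : ‖L u‖ = ‖x‖⁻¹ * ‖L x‖ := by
        rw [hu, map_smul, norm_smul, norm_inv, norm_norm]
      rw [this]
      calc ‖L‖ - δ / 3 = (‖L‖ - δ/3) * ‖x‖ * ‖x‖⁻¹ := by field_simp
        _ < ‖L x‖ * ‖x‖⁻¹ := by
            apply mul_lt_mul_of_pos_right hx (by positivity)
        _ = ‖x‖⁻¹ * ‖L x‖ := by ring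
    set a := a₀ + ε • u with ha
    have hav : a - a₀ = ε • u := by rw [ha]; abel
    have hanorm : ‖a - a₀‖ = ε := by
      rw [hav, norm_smul, hun, Real.norm_eq_abs, abs_of_pos hε0, mul_one]
    have haA : a ∈ A := by
      apply hball₂
      rw [Metric.mem_ball, dist_eq_norm, hanorm]
      exact lt_of_lt_of_le hεr (min_le_right _ _)
    have hq : ‖h a - h a₀‖ / ‖a - a₀‖ ∈ S := ⟨a, haA, by rw [hanorm]; exact hε0,
      by rw [hanorm], rfl⟩
    have hqlb : ‖L‖ - 2 * δ / 3 < ‖h a - h a₀‖ / ‖a - a₀‖ := by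
      have hda : dist a a₀ < r₁ := by
        rw [dist_eq_norm, hanorm]
        exact lt_of_lt_of_le hεr (min_le_left _ _)
      have h2 := hball₁ hda
      have h1 : ‖L (a - a₀)‖ - ‖h a - h a₀ - L (a - a₀)‖ ≤ ‖h a - h a₀‖ := by
        have := norm_sub_norm_le (L (a - a₀)) (L (a - a₀) - (h a - h a₀))
        have h' : L (a - a₀) - (L (a - a₀) - (h a - h a₀)) = h a - h a₀ := by abel
        rw [h'] at this
        rw [norm_sub_rev (L (a - a₀))] at this
        linarith
      have hLa : ‖L (a - a₀)‖ = ε * ‖L u‖ := by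
        rw [hav, map_smul, norm_smul, Real.norm_eq_abs, abs_of_pos hε0]
      rw [hanorm] at *
      rw [lt_div_iff₀ hε0]
      nlinarith
    have := le_csSup hbdd hq
    rw [Real.dist_eq, abs_sub_lt_iff]
    constructor
    · linarith
    · linarith

/-- The adjoint, as a continuous linear map on operators between real inner product spaces. -/
noncomputable def adjCLM {E F : Type*} [NormedAddCommGroup E] [InnerProductSpace ℝ E]
    [NormedAddCommGroup F] [InnerProductSpace ℝ F] [CompleteSpace E] [CompleteSpace F] :
    (E →L[ℝ] F) →L[ℝ] (F →L[ℝ] E) :=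
  LinearMap.mkContinuous
    { toFun := ContinuousLinearMap.adjoint
      map_add' := fun B C => map_add _ B C
      map_smul' := fun c B => by
        ext x
        apply ext_inner_right ℝ
        intro v
        simp [ContinuousLinearMap.adjoint_inner_left, inner_smul_left, inner_smul_right] }
    1 (fun B => by simp [LinearIsometryEquiv.norm_map])

@[simp] lemma adjCLM_apply {E F : Type*} [NormedAddCommGroup E] [InnerProductSpace ℝ E]
    [NormedAddCommGroup F] [InnerProductSpace ℝ F] [CompleteSpace E] [CompleteSpace F]
    (B : E →L[ℝ] F) : adjCLM B = ContinuousLinearMap.adjoint B := rfl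

/-- Derivative of half the squared distance to a point, expressed through the adjoint. -/
lemma grad_lemma {E F : Type*} [NormedAddCommGroup E] [InnerProductSpace ℝ E]
    [NormedAddCommGroup F] [InnerProductSpace ℝ F] [CompleteSpace E] [CompleteSpace F]
    {Fm : E → F} {y : E} (hFd : DifferentiableAt ℝ Fm y) (a : F) :
    HasFDerivAt (fun z => (1 / 2 : ℝ) * ‖a - Fm z‖ ^ 2)
      ((innerSL ℝ : E →L[ℝ] E →L[ℝ] ℝ)
        (ContinuousLinearMap.adjoint (fderiv ℝ Fm y) (Fm y - a))) y := by
  have hD := hFd.hasFDerivAt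
  have h1 : HasFDerivAt (fun z => a - Fm z) (-(fderiv ℝ Fm y)) y := hD.const_sub a
  have h2 := (h1.inner ℝ h1).const_mul (1 / 2 : ℝ)
  have h4 : HasFDerivAt (fun z => (1 / 2 : ℝ) * ‖a - Fm z‖ ^ 2)
      ((1 / 2 : ℝ) • ((fderivInnerCLM ℝ ((a - Fm y), (a - Fm y))).comp
        ((-(fderiv ℝ Fm y)).prod (-(fderiv ℝ Fm y))))) y := by
    simpa only [real_inner_self_eq_norm_sq] using h2
  convert h4 using 1
  · rfl
  ext v
  simp only [innerSL_apply_apply, ContinuousLinearMap.smul_apply, ContinuousLinearMap.comp_apply,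
    ContinuousLinearMap.prod_apply, fderivInnerCLM_apply, ContinuousLinearMap.neg_apply,
    ContinuousLinearMap.adjoint_inner_left, inner_neg_right, inner_neg_left,
    inner_sub_left, inner_sub_right]
  rw [real_inner_comm ((fderiv ℝ Fm y) v) a, real_inner_comm ((fderiv ℝ Fm y) v) (Fm y)]
  simp only [smul_eq_mul]
  ring

/-- Continuity at a point of a localized least-squares solution map. -/
lemma cont_of_min {E1 E2 : Type*} [NormedAddCommGroup E1] [NormedSpace ℝ E1]
    [NormedAddCommGroup E2] [NormedSpace ℝ E2]
    {F : E2 → E1} {Y : Set E2} (hYc : IsCompact (closure Y))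
    (hFc : ContinuousOn F (closure Y))
    {A : Set E1} (hA : IsOpen A) {a₀ : E1} (ha₀ : a₀ ∈ A)
    {g : E1 → E2}
    (hg : ∀ a ∈ A, g a ∈ Y ∧ ∀ y ∈ closure Y, y ≠ g a →
      (1 / 2 : ℝ) * ‖a - F (g a)‖ ^ 2 < (1 / 2 : ℝ) * ‖a - F y‖ ^ 2) :
    ContinuousAt g a₀ := by
  set y₀ := g a₀ with hy₀def
  have hy₀cl : y₀ ∈ closure Y := subset_closure (hg a₀ ha₀).1
  by_contra hc
  rw [ContinuousAt, Metric.tendsto_nhds] at hc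
  push_neg at hc
  obtain ⟨ε, hε, hfreq⟩ := hc
  simp only [← not_lt] at hfreq
  have hfreq2 : ∃ᶠ a in 𝓝 a₀, ¬ dist (g a) (g a₀) < ε ∧ a ∈ A :=
    hfreq.and_eventually (hA.mem_nhds ha₀)
  obtain ⟨u, hu, hup⟩ := Filter.exists_seq_forall_of_frequently hfreq2
  have huA : ∀ k, u k ∈ A := fun k => (hup k).2
  have hud : ∀ k, ε ≤ dist (g (u k)) y₀ := fun k => not_lt.mp (hup k).1
  have hucl : ∀ k, g (u k) ∈ closure Y := fun k => subset_closure (hg _ (huA k)).1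
  obtain ⟨ys, hyscl, φ, hφ, hφt⟩ := hYc.tendsto_subseq hucl
  have huφ : Tendsto (fun k => u (φ k)) atTop (𝓝 a₀) := hu.comp hφ.tendsto_atTop
  have hdist : Tendsto (fun k => dist (g (u (φ k))) y₀) atTop (𝓝 (dist ys y₀)) :=
    (hφt.dist tendsto_const_nhds)
  have hεle : ε ≤ dist ys y₀ := ge_of_tendsto hdist (Filter.Eventually.of_forall fun k => hud (φ k))
  have hne : ys ≠ y₀ := by
    intro h; rw [h] at hεle; simp at hεle; linarith
  have hFys : Tendsto (fun k => F (g (u (φ k)))) atTop (𝓝 (F ys)) := by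
    have h1 : Tendsto (fun k => g (u (φ k))) atTop (𝓝[closure Y] ys) :=
      tendsto_nhdsWithin_of_tendsto_nhds_of_eventually_within _ hφt
        (Filter.Eventually.of_forall fun k => hucl (φ k))
    exact ((hFc ys hyscl).tendsto).comp h1
  have hlim1 : Tendsto (fun k => (1 / 2 : ℝ) * ‖u (φ k) - F (g (u (φ k)))‖ ^ 2) atTop
      (𝓝 ((1 / 2 : ℝ) * ‖a₀ - F ys‖ ^ 2)) :=
    (((huφ.sub hFys).norm.pow 2).const_mul _)
  have hlim2 : Tendsto (fun k => (1 / 2 : ℝ) * ‖u (φ k) - F y₀‖ ^ 2) atTop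
      (𝓝 ((1 / 2 : ℝ) * ‖a₀ - F y₀‖ ^ 2)) :=
    (((huφ.sub tendsto_const_nhds).norm.pow 2).const_mul _)
  have hineq : ∀ k, (1 / 2 : ℝ) * ‖u (φ k) - F (g (u (φ k)))‖ ^ 2 ≤
      (1 / 2 : ℝ) * ‖u (φ k) - F y₀‖ ^ 2 := by
    intro k
    rcases eq_or_ne y₀ (g (u (φ k))) with h | h
    · rw [← h]
    · exact le_of_lt ((hg _ (huA (φ k))).2 y₀ hy₀cl h)
  have hle : (1 / 2 : ℝ) * ‖a₀ - F ys‖ ^ 2 ≤ (1 / 2 : ℝ) * ‖a₀ - F y₀‖ ^ 2 :=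
    le_of_tendsto_of_tendsto' hlim1 hlim2 hineq
  have hlt := (hg a₀ ha₀).2 ys hyscl hne
  rw [← hy₀def] at hlt
  linarith

set_option maxHeartbeats 1000000 in
/-- Chart formulation of Theorem 5.2 combined with Theorem 7.2: derivative and Rice condition
number of the localized least-squares solution map at a nondegenerate local minimizer. -/
theorem stmt_3 {m n p : ℕ}
    (W : Set (EuclideanSpace ℝ (Fin m))) (hW : IsOpen W)
    (F : EuclideanSpace ℝ (Fin m) → EuclideanSpace ℝ (Fin n))
    (hF : ContDiffOn ℝ (⊤ : ℕ∞) F W)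
    (a₀ : EuclideanSpace ℝ (Fin n))
    (y₀ : EuclideanSpace ℝ (Fin m)) (hy₀ : y₀ ∈ W)
    (hmin : IsLocalMin (fun y => (1 / 2 : ℝ) * ‖a₀ - F y‖ ^ 2) y₀)
    (H Hinv : EuclideanSpace ℝ (Fin m) →L[ℝ] EuclideanSpace ℝ (Fin m))
    (hH : ∀ v w, ⟪H v, w⟫ =
      fderiv ℝ (fderiv ℝ (fun y => (1 / 2 : ℝ) * ‖a₀ - F y‖ ^ 2)) y₀ v w)
    (hHinv₁ : H.comp Hinv = ContinuousLinearMap.id ℝ (EuclideanSpace ℝ (Fin m)))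
    (hHinv₂ : Hinv.comp H = ContinuousLinearMap.id ℝ (EuclideanSpace ℝ (Fin m)))
    (A : Set (EuclideanSpace ℝ (Fin n))) (hA : IsOpen A) (ha₀ : a₀ ∈ A)
    (Y : Set (EuclideanSpace ℝ (Fin m))) (hY : IsOpen Y) (hy₀Y : y₀ ∈ Y)
    (hYc : IsCompact (closure Y)) (hYW : closure Y ⊆ W)
    (g : EuclideanSpace ℝ (Fin n) → EuclideanSpace ℝ (Fin m))
    (hg₀ : g a₀ = y₀)
    (hg : ∀ a ∈ A, g a ∈ Y ∧
      ∀ y ∈ closure Y, y ≠ g a →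
        (1 / 2 : ℝ) * ‖a - F (g a)‖ ^ 2 < (1 / 2 : ℝ) * ‖a - F y‖ ^ 2)
    (χ : EuclideanSpace ℝ (Fin m) → EuclideanSpace ℝ (Fin p))
    (hχ : ContDiffOn ℝ (⊤ : ℕ∞) χ W) :
    HasFDerivAt g (Hinv.comp (ContinuousLinearMap.adjoint (fderiv ℝ F y₀))) a₀ ∧
    Tendsto (fun ε : ℝ => sSup {q : ℝ | ∃ a ∈ A, 0 < ‖a - a₀‖ ∧ ‖a - a₀‖ ≤ ε ∧
        q = ‖χ (g a) - χ (g a₀)‖ / ‖a - a₀‖}) (𝓝[>] (0 : ℝ))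
      (𝓝 ‖((fderiv ℝ χ y₀).comp Hinv).comp (ContinuousLinearMap.adjoint (fderiv ℝ F y₀))‖) := by
  have hone : (1 : WithTop ℕ∞) ≤ ((⊤:ℕ∞) : WithTop ℕ∞) := by exact_mod_cast le_top
  have htop : ((⊤:ℕ∞) : WithTop ℕ∞) + 1 ≤ ((⊤:ℕ∞) : WithTop ℕ∞) := by exact_mod_cast le_top
  have hgc : ContinuousAt g a₀ := cont_of_min hYc (hF.continuousOn.mono hYW) hA ha₀ hg
  have hFdiff : ∀ y ∈ W, DifferentiableAt ℝ F y := fun y hy =>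
    (hF.contDiffAt (hW.mem_nhds hy)).differentiableAt (by simp)
  set T : (EuclideanSpace ℝ (Fin m)) → ((EuclideanSpace ℝ (Fin n)) →L[ℝ] (EuclideanSpace ℝ (Fin m))) := fun y => adjCLM (fderiv ℝ F y) with hTdef
  set G : (EuclideanSpace ℝ (Fin n)) × (EuclideanSpace ℝ (Fin m)) → (EuclideanSpace ℝ (Fin m)) := fun q => T q.2 (F q.2 - q.1) with hGdef
  -- gradient formula
  have hgrad : ∀ (a : (EuclideanSpace ℝ (Fin n))), ∀ y ∈ W, HasFDerivAt (fun z => (1 / 2 : ℝ) * ‖a - F z‖ ^ 2)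
      ((innerSL ℝ : (EuclideanSpace ℝ (Fin m)) →L[ℝ] (EuclideanSpace ℝ (Fin m)) →L[ℝ] ℝ) (G (a, y))) y := fun a y hy =>
    grad_lemma (hFdiff y hy) a
  -- first-order condition at minimizers
  have hHinvApp₁ : ∀ v, H (Hinv v) = v := fun v => by
    have := ContinuousLinearMap.ext_iff.mp hHinv₁ v; simpa using this
  have hHinvApp₂ : ∀ v, Hinv (H v) = v := fun v => by
    have := ContinuousLinearMap.ext_iff.mp hHinv₂ v; simpa using this
  have hG0 : ∀ a ∈ A, G (a, g a) = 0 := by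
    intro a ha
    have hyW : g a ∈ W := hYW (subset_closure (hg a ha).1)
    have hloc : IsLocalMin (fun z => (1 / 2 : ℝ) * ‖a - F z‖ ^ 2) (g a) := by
      filter_upwards [hY.mem_nhds (hg a ha).1] with z hz
      rcases eq_or_ne z (g a) with h | h
      · rw [h]
      · exact le_of_lt ((hg a ha).2 z (subset_closure hz) h)
    have hzero := hloc.hasFDerivAt_eq_zero (hgrad a (g a) hyW)
    have h2 := ContinuousLinearMap.ext_iff.mp hzero (G (a, g a))
    simp only [innerSL_apply_apply, ContinuousLinearMap.zero_apply] at h2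
    exact inner_self_eq_zero.mp h2
  have hG00 : G (a₀, y₀) = 0 := by
    have := hG0 a₀ ha₀; rwa [hg₀] at this
  -- smoothness of G
  have hfderivOn : ContDiffOn ℝ ((⊤:ℕ∞) : WithTop ℕ∞) (fun y => fderiv ℝ F y) W := by
    have h1 := hF.fderivWithin hW.uniqueDiffOn htop
    exact h1.congr (fun y hy => (fderivWithin_of_isOpen hW hy).symm)
  have hTsm : ContDiffOn ℝ ((⊤:ℕ∞) : WithTop ℕ∞) T W :=
    (adjCLM (E := (EuclideanSpace ℝ (Fin m))) (F := (EuclideanSpace ℝ (Fin n)))).contDiff.comp_contDiffOn hfderivOn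
  have hGsm : ContDiffOn ℝ ((⊤:ℕ∞) : WithTop ℕ∞) G (Set.univ ×ˢ W) := by
    have hb : ContDiff ℝ ((⊤:ℕ∞) : WithTop ℕ∞)
        (fun q : ((EuclideanSpace ℝ (Fin n)) →L[ℝ] (EuclideanSpace ℝ (Fin m))) × (EuclideanSpace ℝ (Fin n)) => q.1 q.2) := isBoundedBilinearMap_apply.contDiff
    have hin : ContDiffOn ℝ ((⊤:ℕ∞) : WithTop ℕ∞)
        (fun q : (EuclideanSpace ℝ (Fin n)) × (EuclideanSpace ℝ (Fin m)) => (T q.2, F q.2 - q.1)) (Set.univ ×ˢ W) := by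
      apply ContDiffOn.prodMk
      · exact hTsm.comp contDiff_snd.contDiffOn (fun q hq => hq.2)
      · exact (hF.comp contDiff_snd.contDiffOn (fun q hq => hq.2)).sub contDiff_fst.contDiffOn
    exact hb.comp_contDiffOn hin
  have hGat : ContDiffAt ℝ ((⊤:ℕ∞) : WithTop ℕ∞) G (a₀, y₀) :=
    hGsm.contDiffAt ((isOpen_univ.prod hW).mem_nhds ⟨trivial, hy₀⟩)
  set DG := fderiv ℝ G (a₀, y₀) with hDGdef
  have hDG : HasFDerivAt G DG (a₀, y₀) := (hGat.differentiableAt (by simp)).hasFDerivAt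
  -- partial derivative in a
  have hJa : HasFDerivAt (fun a : (EuclideanSpace ℝ (Fin n)) => (a, y₀))
      ((ContinuousLinearMap.id ℝ (EuclideanSpace ℝ (Fin n))).prod 0) a₀ :=
    (hasFDerivAt_id a₀).prodMk (hasFDerivAt_const y₀ a₀)
  have hpa : HasFDerivAt (fun a : (EuclideanSpace ℝ (Fin n)) => G (a, y₀))
      (DG.comp ((ContinuousLinearMap.id ℝ (EuclideanSpace ℝ (Fin n))).prod 0)) a₀ := by exact hDG.comp a₀ hJa
  have hpa' : HasFDerivAt (fun a : (EuclideanSpace ℝ (Fin n)) => G (a, y₀))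
      ((T y₀).comp ((0 : (EuclideanSpace ℝ (Fin n)) →L[ℝ] (EuclideanSpace ℝ (Fin n))) - ContinuousLinearMap.id ℝ (EuclideanSpace ℝ (Fin n)))) a₀ := by
    have h1 : HasFDerivAt (fun a : (EuclideanSpace ℝ (Fin n)) => F y₀ - a)
        ((0 : (EuclideanSpace ℝ (Fin n)) →L[ℝ] (EuclideanSpace ℝ (Fin n))) - ContinuousLinearMap.id ℝ (EuclideanSpace ℝ (Fin n))) a₀ :=
      (hasFDerivAt_const (F y₀) a₀).sub (hasFDerivAt_id a₀)
    exact (T y₀).hasFDerivAt.comp a₀ h1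
  have hDGa : ∀ u, DG (u, 0) = -(T y₀ u) := by
    intro u
    have := ContinuousLinearMap.ext_iff.mp (hpa.unique hpa') u
    simpa using this
  -- partial derivative in y, identified with H via the Hessian hypothesis
  have hJy : HasFDerivAt (fun y : (EuclideanSpace ℝ (Fin m)) => (a₀, y))
      ((0 : (EuclideanSpace ℝ (Fin m)) →L[ℝ] (EuclideanSpace ℝ (Fin n))).prod (ContinuousLinearMap.id ℝ (EuclideanSpace ℝ (Fin m)))) y₀ :=
    (hasFDerivAt_const a₀ y₀).prodMk (hasFDerivAt_id y₀)
  set K := DG.comp ((0 : (EuclideanSpace ℝ (Fin m)) →L[ℝ] (EuclideanSpace ℝ (Fin n))).prod (ContinuousLinearMap.id ℝ (EuclideanSpace ℝ (Fin m)))) with hKdef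
  have hpy : HasFDerivAt (fun y : (EuclideanSpace ℝ (Fin m)) => G (a₀, y)) K y₀ := hDG.comp y₀ hJy
  have hinner : HasFDerivAt (fun y => (innerSL ℝ : (EuclideanSpace ℝ (Fin m)) →L[ℝ] (EuclideanSpace ℝ (Fin m)) →L[ℝ] ℝ) (G (a₀, y)))
      ((innerSL ℝ : (EuclideanSpace ℝ (Fin m)) →L[ℝ] (EuclideanSpace ℝ (Fin m)) →L[ℝ] ℝ).comp K) y₀ :=
    (innerSL ℝ : (EuclideanSpace ℝ (Fin m)) →L[ℝ] (EuclideanSpace ℝ (Fin m)) →L[ℝ] ℝ).hasFDerivAt.comp y₀ hpy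
  have hfEq : (fderiv ℝ (fun z => (1 / 2 : ℝ) * ‖a₀ - F z‖ ^ 2)) =ᶠ[𝓝 y₀]
      (fun y => (innerSL ℝ : (EuclideanSpace ℝ (Fin m)) →L[ℝ] (EuclideanSpace ℝ (Fin m)) →L[ℝ] ℝ) (G (a₀, y))) := by
    filter_upwards [hW.mem_nhds hy₀] with y hy
    exact (hgrad a₀ y hy).fderiv
  have h2nd : fderiv ℝ (fderiv ℝ (fun z => (1 / 2 : ℝ) * ‖a₀ - F z‖ ^ 2)) y₀ =
      (innerSL ℝ : (EuclideanSpace ℝ (Fin m)) →L[ℝ] (EuclideanSpace ℝ (Fin m)) →L[ℝ] ℝ).comp K := by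
    rw [hfEq.fderiv_eq]
    exact hinner.fderiv
  have hHK : H = K := by
    refine ContinuousLinearMap.ext fun v => ?_
    apply ext_inner_right ℝ
    intro w
    rw [hH v w, h2nd]
    simp
  have hDGy : ∀ v, DG (0, v) = H v := by
    intro v
    rw [hHK, hKdef]
    simp
  have hDGsplit : ∀ u v, DG (u, v) = -(T y₀ u) + H v := by
    intro u v
    have h : ((u, v) : (EuclideanSpace ℝ (Fin n)) × (EuclideanSpace ℝ (Fin m))) = (u, 0) + (0, v) := by simp
    rw [h, map_add, hDGa, hDGy]
  -- the invertible full derivative of Φ = (a, G(a,y))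
  set M : ((EuclideanSpace ℝ (Fin n)) × (EuclideanSpace ℝ (Fin m))) →L[ℝ] ((EuclideanSpace ℝ (Fin n)) × (EuclideanSpace ℝ (Fin m))) := (ContinuousLinearMap.fst ℝ (EuclideanSpace ℝ (Fin n)) (EuclideanSpace ℝ (Fin m))).prod DG with hMdef
  set M' : ((EuclideanSpace ℝ (Fin n)) × (EuclideanSpace ℝ (Fin m))) →L[ℝ] ((EuclideanSpace ℝ (Fin n)) × (EuclideanSpace ℝ (Fin m))) := (ContinuousLinearMap.fst ℝ (EuclideanSpace ℝ (Fin n)) (EuclideanSpace ℝ (Fin m))).prod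
      (Hinv.comp ((ContinuousLinearMap.snd ℝ (EuclideanSpace ℝ (Fin n)) (EuclideanSpace ℝ (Fin m))) +
        (T y₀).comp (ContinuousLinearMap.fst ℝ (EuclideanSpace ℝ (Fin n)) (EuclideanSpace ℝ (Fin m))))) with hM'def
  have hMapp : ∀ (u : EuclideanSpace ℝ (Fin n)) (v : EuclideanSpace ℝ (Fin m)),
      M (u, v) = (u, DG (u, v)) := fun u v => rfl
  have hM'app : ∀ (u : EuclideanSpace ℝ (Fin n)) (w : EuclideanSpace ℝ (Fin m)),
      M' (u, w) = (u, Hinv (w + T y₀ u)) := fun u w => rfl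
  have hMM' : Function.LeftInverse M' M := by
    rintro ⟨u, v⟩
    rw [hMapp, hM'app, hDGsplit]
    have h : -(T y₀ u) + H v + T y₀ u = H v := by abel
    rw [h, hHinvApp₂]
  have hM'M : Function.RightInverse M' M := by
    rintro ⟨u, w⟩
    rw [hM'app, hMapp, hDGsplit, hHinvApp₁]
    have h : -(T y₀ u) + (w + T y₀ u) = w := by abel
    rw [h]
  set e := ContinuousLinearEquiv.equivOfInverse M M' hMM' hM'M with hedef
  set Φ : (EuclideanSpace ℝ (Fin n)) × (EuclideanSpace ℝ (Fin m)) → (EuclideanSpace ℝ (Fin n)) × (EuclideanSpace ℝ (Fin m)) := fun q => (q.1, G q) with hΦdef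
  have hΦat : ContDiffAt ℝ ((⊤:ℕ∞) : WithTop ℕ∞) Φ (a₀, y₀) := contDiffAt_fst.prodMk hGat
  have hcoeM : (e : ((EuclideanSpace ℝ (Fin n)) × (EuclideanSpace ℝ (Fin m))) →L[ℝ]
      ((EuclideanSpace ℝ (Fin n)) × (EuclideanSpace ℝ (Fin m)))) = M := by
    rw [hedef]
    exact ContinuousLinearMap.ext fun x => ContinuousLinearEquiv.equivOfInverse_apply M M' hMM' hM'M x
  have hcoeM' : (e.symm : ((EuclideanSpace ℝ (Fin n)) × (EuclideanSpace ℝ (Fin m))) →L[ℝ]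
      ((EuclideanSpace ℝ (Fin n)) × (EuclideanSpace ℝ (Fin m)))) = M' := by
    rw [hedef, ContinuousLinearEquiv.symm_equivOfInverse]
    exact ContinuousLinearMap.ext fun x => ContinuousLinearEquiv.equivOfInverse_apply M' M hM'M hMM' x
  have hΦd : HasFDerivAt Φ (e : ((EuclideanSpace ℝ (Fin n)) × (EuclideanSpace ℝ (Fin m))) →L[ℝ] ((EuclideanSpace ℝ (Fin n)) × (EuclideanSpace ℝ (Fin m)))) (a₀, y₀) := by
    rw [hcoeM]
    exact (hasFDerivAt_fst).prodMk hDG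
  have hΦs : HasStrictFDerivAt Φ (e : ((EuclideanSpace ℝ (Fin n)) × (EuclideanSpace ℝ (Fin m))) →L[ℝ] ((EuclideanSpace ℝ (Fin n)) × (EuclideanSpace ℝ (Fin m)))) (a₀, y₀) :=
    hΦat.hasStrictFDerivAt' hΦd (by simp)
  set ψ := HasStrictFDerivAt.localInverse Φ e (a₀, y₀) hΦs with hψdef
  have hΦpt : Φ (a₀, y₀) = (a₀, 0) := by
    rw [hΦdef]; simp [hG00]
  have hψd : HasStrictFDerivAt ψ (e.symm : ((EuclideanSpace ℝ (Fin n)) × (EuclideanSpace ℝ (Fin m))) →L[ℝ] ((EuclideanSpace ℝ (Fin n)) × (EuclideanSpace ℝ (Fin m)))) (a₀, 0) := by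
    have h := hΦs.to_localInverse
    rwa [hΦpt] at h
  have hpair : Tendsto (fun a : (EuclideanSpace ℝ (Fin n)) => (a, g a)) (𝓝 a₀) (𝓝 (a₀, y₀)) := by
    have h : ContinuousAt (fun a : (EuclideanSpace ℝ (Fin n)) => (a, g a)) a₀ := continuousAt_id.prodMk hgc
    rw [ContinuousAt, hg₀] at h
    exact h
  have heq : g =ᶠ[𝓝 a₀] (fun a => (ψ (a, 0)).2) := by
    filter_upwards [hpair.eventually hΦs.eventually_left_inverse, hA.mem_nhds ha₀] with a h1 h2
    have hΦa : Φ (a, g a) = (a, 0) := by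
      rw [hΦdef]; simp [hG0 a h2]
    rw [hΦa] at h1
    exact (congrArg Prod.snd h1).symm
  have hJ0 : HasFDerivAt (fun a : (EuclideanSpace ℝ (Fin n)) => ((a, (0 : (EuclideanSpace ℝ (Fin m)))) : (EuclideanSpace ℝ (Fin n)) × (EuclideanSpace ℝ (Fin m))))
      ((ContinuousLinearMap.id ℝ (EuclideanSpace ℝ (Fin n))).prod 0) a₀ :=
    (hasFDerivAt_id a₀).prodMk (hasFDerivAt_const 0 a₀)
  have hcomp : HasFDerivAt (fun a : (EuclideanSpace ℝ (Fin n)) => (ψ (a, 0)).2)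
      ((ContinuousLinearMap.snd ℝ (EuclideanSpace ℝ (Fin n)) (EuclideanSpace ℝ (Fin m))).comp
        (((e.symm : ((EuclideanSpace ℝ (Fin n)) × (EuclideanSpace ℝ (Fin m))) →L[ℝ] ((EuclideanSpace ℝ (Fin n)) × (EuclideanSpace ℝ (Fin m))))).comp
          ((ContinuousLinearMap.id ℝ (EuclideanSpace ℝ (Fin n))).prod 0))) a₀ :=
    (ContinuousLinearMap.snd ℝ (EuclideanSpace ℝ (Fin n)) (EuclideanSpace ℝ (Fin m))).hasFDerivAt.comp a₀ ((hψd.hasFDerivAt).comp a₀ hJ0)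
  have hgd0 : HasFDerivAt g
      ((ContinuousLinearMap.snd ℝ (EuclideanSpace ℝ (Fin n)) (EuclideanSpace ℝ (Fin m))).comp
        (((e.symm : ((EuclideanSpace ℝ (Fin n)) × (EuclideanSpace ℝ (Fin m))) →L[ℝ] ((EuclideanSpace ℝ (Fin n)) × (EuclideanSpace ℝ (Fin m))))).comp
          ((ContinuousLinearMap.id ℝ (EuclideanSpace ℝ (Fin n))).prod 0))) a₀ :=
    hcomp.congr_of_eventuallyEq heq
  have hfinal : (ContinuousLinearMap.snd ℝ (EuclideanSpace ℝ (Fin n)) (EuclideanSpace ℝ (Fin m))).comp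
      (((e.symm : ((EuclideanSpace ℝ (Fin n)) × (EuclideanSpace ℝ (Fin m))) →L[ℝ] ((EuclideanSpace ℝ (Fin n)) × (EuclideanSpace ℝ (Fin m))))).comp
        ((ContinuousLinearMap.id ℝ (EuclideanSpace ℝ (Fin n))).prod 0)) =
      Hinv.comp (ContinuousLinearMap.adjoint (fderiv ℝ F y₀)) := by
    ext u
    rw [ContinuousLinearMap.comp_apply, ContinuousLinearMap.comp_apply, hcoeM']
    simp [hM'def, hTdef]
  have hgd : HasFDerivAt g (Hinv.comp (ContinuousLinearMap.adjoint (fderiv ℝ F y₀))) a₀ :=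
    hfinal ▸ hgd0
  refine ⟨hgd, ?_⟩
  -- part 2 : the condition number limit
  have hχd : HasFDerivAt χ (fderiv ℝ χ y₀) (g a₀) := by
    rw [hg₀]
    exact ((hχ.contDiffAt (hW.mem_nhds hy₀)).differentiableAt (by simp)).hasFDerivAt
  have hρ : HasFDerivAt (fun a => χ (g a))
      ((fderiv ℝ χ y₀).comp (Hinv.comp (ContinuousLinearMap.adjoint (fderiv ℝ F y₀)))) a₀ :=
    hχd.comp a₀ hgd
  have := rice_limit hA ha₀ hρ
  rwa [← ContinuousLinearMap.comp_assoc] at this
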